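/- The second regularized smoothing factor has the limiting behavior: for every δ > 0, the function r ↦ s₂(r/δ)/r³, defined for r ≠ 0, tends to 32/(3δ³√π) as r → 0. -/

import Mathlib

open Real Filter Topology

/-- The error function erf(r) = (2/√π)·∫₀ʳ exp(−t²) dt. -/
noncomputable def erf (r : ℝ) : ℝ := (2 / Real.sqrt π) * ∫ t in (0 : ℝ)..r, Real.exp (-t ^ 2)

/-- The first smoothing factor s₁. -/
noncomputable def s₁ (r : ℝ) : ℝ :=
  erf r - (2 / 3) * r * (2 * r ^ 2 - 5) * Real.exp (-r ^ 2) / Real.sqrt π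

/-- The second smoothing factor s₂. -/
noncomputable def s₂ (r : ℝ) : ℝ :=
  erf r - (2 / 3) * r * (4 * r ^ 4 - 14 * r ^ 2 + 3) * Real.exp (-r ^ 2) / Real.sqrt π

lemma hasDerivAt_s₂ (x : ℝ) :
    HasDerivAt s₂ (16 / (3 * Real.sqrt π) * Real.exp (-x ^ 2) * x ^ 2 * (6 - 6 * x ^ 2 + x ^ 4)) x := by
  have hπ : Real.sqrt π ≠ 0 := by positivity
  have hcont : Continuous fun t : ℝ => Real.exp (-t ^ 2) := by continuity
  have h1 : HasDerivAt (fun r : ℝ => ∫ t in (0 : ℝ)..r, Real.exp (-t ^ 2)) (Real.exp (-x ^ 2)) x :=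
    (hcont.integral_hasStrictDerivAt 0 x).hasDerivAt
  have herf : HasDerivAt erf (2 / Real.sqrt π * Real.exp (-x ^ 2)) x := h1.const_mul _
  have hq : HasDerivAt (fun r : ℝ => 4 * r ^ 4 - 14 * r ^ 2 + 3) (16 * x ^ 3 - 28 * x) x := by
    have := ((((hasDerivAt_pow 4 x).const_mul 4).sub
      ((hasDerivAt_pow 2 x).const_mul 14)).add_const (3 : ℝ))
    exact this.congr_deriv (by push_cast; ring)
  have hexp : HasDerivAt (fun r : ℝ => Real.exp (-r ^ 2)) (Real.exp (-x ^ 2) * (-(2 * x))) x := by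
    have hn : HasDerivAt (fun r : ℝ => -r ^ 2) (-(2 * x)) x := by
      have := (hasDerivAt_pow 2 x).neg
      exact this.congr_deriv (by push_cast; ring)
    exact hn.exp
  have hprod : HasDerivAt (fun r : ℝ => (2 / 3) * r * (4 * r ^ 4 - 14 * r ^ 2 + 3) *
      Real.exp (-r ^ 2) / Real.sqrt π)
      ((((2 / 3) * (4 * x ^ 4 - 14 * x ^ 2 + 3) + (2 / 3) * x * (16 * x ^ 3 - 28 * x)) *
        Real.exp (-x ^ 2) + (2 / 3) * x * (4 * x ^ 4 - 14 * x ^ 2 + 3) *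
        (Real.exp (-x ^ 2) * (-(2 * x)))) / Real.sqrt π) x := by
    have hid : HasDerivAt (fun r : ℝ => (2 / 3) * r) (2 / 3) x := by
      simpa using (hasDerivAt_id x).const_mul (2 / 3 : ℝ)
    exact ((hid.mul hq).mul hexp).div_const (Real.sqrt π)
  have := herf.sub hprod
  exact this.congr_deriv (by field_simp; ring)

lemma s₂_zero : s₂ 0 = 0 := by
  simp [s₂, erf]

/-- For every δ > 0, s₂(r/δ)/r³ tends to 32/(3δ³√π) as r → 0 (r ≠ 0). -/
theorem s2_limit_at_zero (δ : ℝ) (hδ : 0 < δ) :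
    Tendsto (fun r : ℝ => s₂ (r / δ) / r ^ 3) (𝓝[≠] 0)
      (𝓝 (32 / (3 * δ ^ 3 * Real.sqrt π))) := by
  have hπ : Real.sqrt π ≠ 0 := by positivity
  have hδ' : δ ≠ 0 := ne_of_gt hδ
  set D : ℝ → ℝ := fun y =>
    16 / (3 * Real.sqrt π) * Real.exp (-y ^ 2) * y ^ 2 * (6 - 6 * y ^ 2 + y ^ 4)
  have hf : ∀ x : ℝ, HasDerivAt (fun r : ℝ => s₂ (r / δ)) (D (x / δ) * (1 / δ)) x := by
    intro x
    exact (hasDerivAt_s₂ (x / δ)).comp x (by simpa using (hasDerivAt_id x).div_const δ : HasDerivAt (fun r : ℝ => r / δ) (1 / δ) x)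
  have hg : ∀ x : ℝ, HasDerivAt (fun r : ℝ => r ^ 3) (3 * x ^ 2) x := by
    intro x
    simpa using hasDerivAt_pow 3 x
  have key : Tendsto (fun x : ℝ => (D (x / δ) * (1 / δ)) / (3 * x ^ 2)) (𝓝[≠] 0)
      (𝓝 (32 / (3 * δ ^ 3 * Real.sqrt π))) := by
    have hcont : Tendsto (fun x : ℝ =>
        16 / (9 * Real.sqrt π * δ ^ 3) * Real.exp (-(x / δ) ^ 2) *
          (6 - 6 * (x / δ) ^ 2 + (x / δ) ^ 4)) (𝓝[≠] 0)
        (𝓝 (32 / (3 * δ ^ 3 * Real.sqrt π))) := by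
      have hc : ContinuousAt (fun x : ℝ =>
          16 / (9 * Real.sqrt π * δ ^ 3) * Real.exp (-(x / δ) ^ 2) *
            (6 - 6 * (x / δ) ^ 2 + (x / δ) ^ 4)) 0 := by
        fun_prop
      have := hc.tendsto.mono_left (nhdsWithin_le_nhds (s := {(0:ℝ)}ᶜ))
      convert this using 2
      simp
      field_simp
      ring
    refine hcont.congr' ?_
    filter_upwards [self_mem_nhdsWithin] with x hx
    have hx' : (x : ℝ) ≠ 0 := hx
    simp only [D]
    field_simp
    ring
  refine HasDerivAt.lhopital_zero_nhdsNE (Eventually.of_forall fun x => hf x)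
    (Eventually.of_forall fun x => hg x) ?_ ?_ ?_ key
  · filter_upwards [self_mem_nhdsWithin] with x hx
    have hx' : (x : ℝ) ≠ 0 := hx
    positivity
  · have := ((hf 0).continuousAt).tendsto.mono_left (nhdsWithin_le_nhds (s := {(0:ℝ)}ᶜ))
    simpa [s₂_zero] using this
  · have := ((hg 0).continuousAt).tendsto.mono_left (nhdsWithin_le_nhds (s := {(0:ℝ)}ᶜ))
    simpa using this
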